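/- In the setting of the previous statement, ker(conj(w) − Z*) = ℂ·[w] for every w ∈ ℂ; that is, every complex number conj(w) is an eigenvalue of Z* with one-dimensional eigenspace spanned by the point wave function [w]. Consequently Z and Z* are unbounded operators. -/

import Mathlib

/-- In the setting of Statement 8, for every `w ∈ ℂ` the kernel of
`conj w - Z†` is the one-dimensional span `ℂ • K w` of the point wave function `K w`
(so every `conj w` is an eigenvalue of `Z†` of multiplicity one), and consequently the
operators `Z` and `Z†` are unbounded. -/
theorem adjoint_eigenspaces_and_unboundedness
    (H : Type*) [NormedAddCommGroup H] [InnerProductSpace ℂ H] [CompleteSpace H]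
    (incl : H →ₗ[ℂ] (ℂ → ℂ)) (hinj : Function.Injective incl)
    (hentire : ∀ ψ : H, Differentiable ℂ (incl ψ))
    (hpoly : ∀ p : Polynomial ℂ, ∃ ψ : H, incl ψ = fun z => p.eval z)
    (hdensePoly : Dense {ψ : H | ∃ p : Polynomial ℂ, incl ψ = fun z => p.eval z})
    (K : ℂ → H)
    (hK : ∀ (w : ℂ) (ψ : H), (inner ℂ (K w) ψ : ℂ) = incl ψ w)
    (Z : H →ₗ.[ℂ] H)
    (hZdom : ∀ ψ : H, ψ ∈ Z.domain ↔ ∃ χ : H, incl χ = fun z => z * incl ψ z)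
    (hZ : ∀ ψ : Z.domain, incl (Z ψ) = fun z => z * incl (ψ : H) z)
    (hdense : Dense (Z.domain : Set H)) :
    (∀ w : ℂ,
      (∃ hw : K w ∈ Z.adjoint.domain, K w ≠ 0 ∧
        Z.adjoint ⟨K w, hw⟩ = (starRingEnd ℂ) w • K w) ∧
      (∀ (ψ : H) (hψ : ψ ∈ Z.adjoint.domain),
        Z.adjoint ⟨ψ, hψ⟩ = (starRingEnd ℂ) w • ψ ↔ ∃ c : ℂ, ψ = c • K w)) ∧
    (¬ ∃ C : ℝ, ∀ ψ : Z.domain, ‖Z ψ‖ ≤ C * ‖(ψ : H)‖) ∧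
    (¬ ∃ C : ℝ, ∀ φ : Z.adjoint.domain, ‖Z.adjoint φ‖ ≤ C * ‖(φ : H)‖) := by
  classical
  -- the constant function 1
  obtain ⟨e1, he1⟩ := hpoly 1
  have he1' : ∀ z : ℂ, incl e1 z = 1 := fun z => by rw [he1]; simp
  have hKe1 : ∀ w : ℂ, (inner ℂ (K w) e1 : ℂ) = 1 := fun w => by rw [hK]; exact he1' w
  have hKne : ∀ w : ℂ, K w ≠ 0 := by
    intro w h
    have h1 := hKe1 w
    rw [h, inner_zero_left] at h1
    exact one_ne_zero h1.symm
  -- inner product of K w with Z x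
  have hinnerZ : ∀ (w : ℂ) (x : Z.domain), (inner ℂ (K w) (Z x) : ℂ) = w * incl (x : H) w := by
    intro w x
    rw [hK]
    exact congrFun (hZ x) w
  -- formal adjoint relation
  have hrel : ∀ (w : ℂ) (x : Z.domain),
      (inner ℂ ((starRingEnd ℂ) w • K w) (x : H) : ℂ) = inner ℂ (K w) (Z x) := by
    intro w x
    rw [inner_smul_left, hinnerZ, hK]
    simp
  have hmem : ∀ w : ℂ, K w ∈ Z.adjoint.domain := fun w =>
    LinearPMap.mem_adjoint_domain_of_exists _ ⟨(starRingEnd ℂ) w • K w, hrel w⟩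
  have happly : ∀ w : ℂ, Z.adjoint ⟨K w, hmem w⟩ = (starRingEnd ℂ) w • K w := fun w =>
    LinearPMap.adjoint_apply_eq hdense _ (hrel w)
  -- elements realizing polynomials are in the domain of Z
  have hpolyDom : ∀ (p : Polynomial ℂ) (φ : H),
      incl φ = (fun z => p.eval z) → φ ∈ Z.domain := by
    intro p φ hφ
    rw [hZdom]
    obtain ⟨χ, hχ⟩ := hpoly (Polynomial.X * p)
    exact ⟨χ, by rw [hχ, hφ]; funext z; simp⟩
  refine ⟨?_, ?_, ?_⟩
  · intro w
    refine ⟨⟨hmem w, hKne w, happly w⟩, ?_⟩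
    intro ψ hψ
    constructor
    · intro heig
      -- forward direction: eigenvector must be a multiple of K w
      set c : ℂ := (starRingEnd ℂ) (inner ℂ ψ e1 : ℂ) with hc
      refine ⟨c, ?_⟩
      have hformal : ∀ x : Z.domain, (inner ℂ ψ (Z x) : ℂ) = w * inner ℂ ψ (x : H) := by
        intro x
        have h := LinearPMap.adjoint_isFormalAdjoint hdense ⟨ψ, hψ⟩ x
        rw [heig, inner_smul_left] at h
        simpa using h.symm
      set u : H := ψ - c • K w with hu
      -- u is orthogonal to all polynomial elements
      have horth : ∀ φ ∈ {ψ : H | ∃ p : Polynomial ℂ, incl ψ = fun z => p.eval z},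
          (inner ℂ u φ : ℂ) = 0 := by
        rintro φ ⟨q, hq⟩
        obtain ⟨p, hp⟩ := Polynomial.X_sub_C_dvd_sub_C_eval (a := w) (p := q)
        obtain ⟨φp, hφp⟩ := hpoly p
        have hφpDom : φp ∈ Z.domain := hpolyDom p φp hφp
        set x : Z.domain := ⟨φp, hφpDom⟩ with hx
        -- φ = Z x - w • φp + q.eval w • e1
        have hrepr : φ = Z x - w • φp + q.eval w • e1 := by
          apply hinj
          rw [map_add, map_sub, map_smul, map_smul, hZ x, hq]
          funext z
          have hz := congrArg (fun r => Polynomial.eval z r) hp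
          simp only [Polynomial.eval_sub, Polynomial.eval_mul, Polynomial.eval_X,
            Polynomial.eval_C] at hz
          simp only [Pi.add_apply, Pi.sub_apply, Pi.smul_apply, smul_eq_mul, hφp, he1']
          push_cast
          have hxφ : incl (x : H) z = p.eval z := by rw [hx]; exact congrFun hφp z
          linear_combination hz - z * hxφ
        have hinner : (inner ℂ ψ φ : ℂ) = q.eval w * inner ℂ ψ e1 := by
          rw [hrepr, inner_add_right, inner_sub_right, inner_smul_right, inner_smul_right,
            hformal x]
          have : (x : H) = φp := rfl
          rw [this]
          ring
        have hinnerK : (inner ℂ (K w) φ : ℂ) = q.eval w := by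
          rw [hK, hq]
        rw [hu, inner_sub_left, inner_smul_left, hinner, hinnerK, hc]
        simp
        ring
      -- density implies u = 0
      have hclosed : IsClosed {φ : H | (inner ℂ u φ : ℂ) = 0} :=
        isClosed_eq (innerSL ℂ u).continuous continuous_const
      have hsub : {ψ : H | ∃ p : Polynomial ℂ, incl ψ = fun z => p.eval z}
          ⊆ {φ : H | (inner ℂ u φ : ℂ) = 0} := horth
      have hall : ∀ φ : H, (inner ℂ u φ : ℂ) = 0 := by
        intro φ
        have : φ ∈ closure {ψ : H | ∃ p : Polynomial ℂ, incl ψ = fun z => p.eval z} := by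
          rw [hdensePoly.closure_eq]; trivial
        exact hclosed.closure_subset_iff.mpr hsub this
      have : u = 0 := by
        have := hall u
        rwa [inner_self_eq_zero] at this
      rw [hu, sub_eq_zero] at this
      exact this
    · rintro ⟨c, rfl⟩
      -- reverse direction
      apply LinearPMap.adjoint_apply_eq hdense
      intro x
      rw [inner_smul_left, inner_smul_left, inner_smul_left, hinnerZ, hK]
      simp
      ring
  · -- Z is unbounded
    rintro ⟨C, hC⟩
    set w : ℂ := ((|C| + 1 : ℝ) : ℂ) with hw
    set v : H := K w with hv
    have hvne : v ≠ 0 := hKne w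
    have hvpos : (0 : ℝ) < ‖v‖ := norm_pos_iff.mpr hvne
    have hstep : ∀ x : Z.domain, ‖w‖ * ‖(inner ℂ v (x : H) : ℂ)‖ ≤ C * ‖v‖ * ‖(x : H)‖ := by
      intro x
      have h1 : ‖(inner ℂ v (Z x) : ℂ)‖ ≤ ‖v‖ * ‖Z x‖ := norm_inner_le_norm _ _
      have h2 : ‖Z x‖ ≤ C * ‖(x : H)‖ := hC x
      have h3 : (inner ℂ v (Z x) : ℂ) = w * inner ℂ v (x : H) := by
        rw [hv, hinnerZ, hK]
      rw [h3, norm_mul] at h1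
      nlinarith [norm_nonneg (v : H), norm_nonneg ((x : H))]
    -- extend to all of H by density
    have hclosed : IsClosed {φ : H | ‖w‖ * ‖(inner ℂ v φ : ℂ)‖ ≤ C * ‖v‖ * ‖φ‖} :=
      isClosed_le (continuous_const.mul (innerSL ℂ v).continuous.norm)
        (continuous_const.mul continuous_norm)
    have hall : ‖w‖ * ‖(inner ℂ v v : ℂ)‖ ≤ C * ‖v‖ * ‖v‖ := by
      have hsub : (Z.domain : Set H) ⊆ {φ : H | ‖w‖ * ‖(inner ℂ v φ : ℂ)‖ ≤ C * ‖v‖ * ‖φ‖} := by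
        rintro φ hφ
        exact hstep ⟨φ, hφ⟩
      have : v ∈ closure (Z.domain : Set H) := by rw [hdense.closure_eq]; trivial
      exact hclosed.closure_subset_iff.mpr hsub this
    have hvv : ‖(inner ℂ v v : ℂ)‖ = ‖v‖ * ‖v‖ := by
      rw [inner_self_eq_norm_sq_to_K]
      simp [sq]
    rw [hvv] at hall
    have hwnorm : ‖w‖ = |C| + 1 := by
      rw [hw]
      rw [Complex.norm_real, Real.norm_eq_abs, abs_of_nonneg (by positivity)]
    have hCabs : C ≤ |C| := le_abs_self C
    nlinarith
  · -- Z† is unbounded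
    rintro ⟨C, hC⟩
    set w : ℂ := ((|C| + 1 : ℝ) : ℂ) with hw
    have h1 := hC ⟨K w, hmem w⟩
    rw [happly w, norm_smul] at h1
    have hKpos : (0 : ℝ) < ‖K w‖ := norm_pos_iff.mpr (hKne w)
    have hwnorm : ‖(starRingEnd ℂ) w‖ = |C| + 1 := by
      rw [RCLike.norm_conj, hw, Complex.norm_real, Real.norm_eq_abs,
        abs_of_nonneg (by positivity)]
    rw [hwnorm] at h1
    have hCabs : C ≤ |C| := le_abs_self C
    nlinarith
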